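/- Let n ≥ 1 and suppose 1 ≤ j ≤ n with j not a power of 2. Then the j-th elementary symmetric polynomial σ_j in Λ_{F_2}(a_1,...,a_n)^{Σ_n} is decomposable: there exists 0 < i < j such that σ_j = σ_i · σ_{j-i}. -/

import Mathlib

open MvPolynomial

/-- The ideal of squares of generators; over `F₂` the quotient of the polynomial ring by this
ideal is the exterior algebra `Λ_{F₂}(a_1, …, a_n)`. -/
noncomputable def sqIdeal (n : ℕ) : Ideal (MvPolynomial (Fin n) (ZMod 2)) :=
  Ideal.span (Set.range fun i : Fin n => (X i : MvPolynomial (Fin n) (ZMod 2)) ^ 2)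

/-- The exterior algebra `Λ_{F₂}(a_1, …, a_n)`, modeled (char 2) as `F₂[a]/(aᵢ²)`. -/
noncomputable abbrev ExtF2 (n : ℕ) : Type :=
  MvPolynomial (Fin n) (ZMod 2) ⧸ sqIdeal n

/-- The action of a permutation `g ∈ Σ_n` on `Λ_{F₂}(a_1,…,a_n)` by permuting generators. -/
noncomputable def permAct (n : ℕ) (g : Equiv.Perm (Fin n)) : ExtF2 n →ₐ[ZMod 2] ExtF2 n :=
  Ideal.Quotient.liftₐ (sqIdeal n)
    ((Ideal.Quotient.mkₐ (ZMod 2) (sqIdeal n)).comp (rename g : _ →ₐ[ZMod 2] _))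
    (by
      intro a ha
      refine Submodule.span_induction ?_ ?_ ?_ ?_ ha
      · rintro _ ⟨i, rfl⟩
        rw [AlgHom.comp_apply, map_pow, rename_X, Ideal.Quotient.mkₐ_eq_mk,
          Ideal.Quotient.eq_zero_iff_mem]
        exact Ideal.subset_span ⟨g i, rfl⟩
      · exact map_zero _
      · intro x y _ _ hx hy; rw [map_add, hx, hy, add_zero]
      · intro c x _ hx; rw [smul_eq_mul, map_mul, hx, mul_zero])


section AuxLemmas
open Finset

theorem odd_choose_pow (k r : ℕ) (hr : r < 2 ^ k) :
    (2 ^ k + r).choose (2 ^ k) % 2 = 1 := by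
  induction k generalizing r with
  | zero =>
    interval_cases r
    simp
  | succ k ih =>
    have h2 : Fact (Nat.Prime 2) := ⟨Nat.prime_two⟩
    have hmod := @Choose.choose_modEq_choose_mod_mul_choose_div_nat (2 ^ (k+1) + r) (2 ^ (k+1)) 2 h2
    have hpow : 2 ^ (k+1) = 2 * 2 ^ k := by ring
    have e1 : (2 ^ (k+1) + r) % 2 = r % 2 := by omega
    have e2 : (2 ^ (k+1)) % 2 = 0 := by omega
    have e3 : (2 ^ (k+1) + r) / 2 = 2 ^ k + r / 2 := by omega
    have e4 : (2 ^ (k+1)) / 2 = 2 ^ k := by omega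
    rw [e1, e2, e3, e4, Nat.choose_zero_right, one_mul] at hmod
    have := ih (r / 2) (by omega)
    unfold Nat.ModEq at hmod
    omega


theorem prod_mem_sq (n : ℕ) (S T : Finset (Fin n)) (h : ¬ Disjoint S T) :
    ((∏ x ∈ S, X x) * ∏ x ∈ T, X x : MvPolynomial (Fin n) (ZMod 2)) ∈ sqIdeal n := by
  obtain ⟨a, haS, haT⟩ := Finset.not_disjoint_iff.mp h
  have : ((∏ x ∈ S, X x) * ∏ x ∈ T, X x : MvPolynomial (Fin n) (ZMod 2)) =
      ((∏ x ∈ S.erase a, X x) * ∏ x ∈ T.erase a, X x) * (X a ^ 2) := by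
    rw [← Finset.mul_prod_erase S _ haS, ← Finset.mul_prod_erase T _ haT]; ring
  rw [this]
  exact Ideal.mul_mem_left _ _ (Ideal.subset_span ⟨a, rfl⟩)

set_option maxHeartbeats 1000000 in
theorem key (n i l : ℕ) :
    Ideal.Quotient.mk (sqIdeal n) (esymm (Fin n) (ZMod 2) i * esymm (Fin n) (ZMod 2) l) =
      ((i + l).choose i) •
        Ideal.Quotient.mk (sqIdeal n) (esymm (Fin n) (ZMod 2) (i + l)) := by
  classical
  set mk := Ideal.Quotient.mk (sqIdeal n) with hmk
  have expand : esymm (Fin n) (ZMod 2) i * esymm (Fin n) (ZMod 2) l =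
      ∑ p ∈ (powersetCard i (univ : Finset (Fin n))) ×ˢ (powersetCard l univ),
        (∏ x ∈ p.1, X x) * ∏ x ∈ p.2, (X x : MvPolynomial (Fin n) (ZMod 2)) := by
    rw [esymm, esymm, Finset.sum_mul_sum, Finset.sum_product]
  rw [expand, map_sum]
  -- split off non-disjoint pairs
  rw [← Finset.sum_filter_add_sum_filter_not _ (fun p => Disjoint p.1 p.2)]
  have hzero : ∑ p ∈ ((powersetCard i (univ : Finset (Fin n))) ×ˢ (powersetCard l univ)).filter
      (fun p => ¬ Disjoint p.1 p.2), mk ((∏ x ∈ p.1, X x) * ∏ x ∈ p.2, X x) = 0 := by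
    refine Finset.sum_eq_zero fun p hp => ?_
    rw [Finset.mem_filter] at hp
    exact Ideal.Quotient.eq_zero_iff_mem.mpr (prod_mem_sq n p.1 p.2 hp.2)
  rw [hzero, add_zero]
  -- rewrite disjoint terms as union products
  have hterm : ∀ p ∈ ((powersetCard i (univ : Finset (Fin n))) ×ˢ (powersetCard l univ)).filter
      (fun p => Disjoint p.1 p.2),
      mk ((∏ x ∈ p.1, X x) * ∏ x ∈ p.2, X x) = mk (∏ x ∈ p.1 ∪ p.2, X x) := by
    intro p hp
    rw [Finset.mem_filter] at hp
    rw [← Finset.prod_union hp.2]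
  rw [Finset.sum_congr rfl hterm]
  set D := ((powersetCard i (univ : Finset (Fin n))) ×ˢ (powersetCard l univ)).filter
      (fun p : Finset (Fin n) × Finset (Fin n) => Disjoint p.1 p.2) with hD
  have hcomp : ∑ p ∈ D, mk (∏ x ∈ p.1 ∪ p.2, X x) =
      ∑ U ∈ D.image (fun p => p.1 ∪ p.2),
        (D.filter (fun p => p.1 ∪ p.2 = U)).card • mk (∏ x ∈ U, X x) :=
    Finset.sum_comp (fun U => mk (∏ x ∈ U, X x)) (fun p : Finset (Fin n) × Finset (Fin n) => p.1 ∪ p.2)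
  rw [hcomp]
  have himg : D.image (fun p => p.1 ∪ p.2) = powersetCard (i + l) (univ : Finset (Fin n)) := by
    apply Finset.Subset.antisymm
    · intro U hU
      rw [Finset.mem_image] at hU
      obtain ⟨p, hp, rfl⟩ := hU
      rw [hD, Finset.mem_filter, Finset.mem_product, Finset.mem_powersetCard,
        Finset.mem_powersetCard] at hp
      rw [Finset.mem_powersetCard]
      exact ⟨Finset.subset_univ _, by rw [Finset.card_union_of_disjoint hp.2, hp.1.1.2, hp.1.2.2]⟩
    · intro U hU
      rw [Finset.mem_powersetCard] at hU
      obtain ⟨S, hSU, hScard⟩ := Finset.exists_subset_card_eq (show i ≤ U.card by omega)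
      rw [Finset.mem_image]
      refine ⟨(S, U \ S), ?_, by simp [Finset.union_sdiff_of_subset hSU]⟩
      rw [hD, Finset.mem_filter, Finset.mem_product, Finset.mem_powersetCard,
        Finset.mem_powersetCard]
      refine ⟨⟨⟨Finset.subset_univ _, hScard⟩, ⟨Finset.subset_univ _, ?_⟩⟩,
        Finset.disjoint_sdiff⟩
      rw [Finset.card_sdiff_of_subset hSU, hU.2, hScard]; omega
  have hfib : ∀ U ∈ powersetCard (i + l) (univ : Finset (Fin n)),
      (D.filter (fun p => p.1 ∪ p.2 = U)).card = (i + l).choose i := by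
    intro U hU
    rw [Finset.mem_powersetCard] at hU
    have : (D.filter (fun p => p.1 ∪ p.2 = U)).card = (U.powersetCard i).card := by
      apply Finset.card_nbij' (i := fun p => p.1) (j := fun S => (S, U \ S))
      · intro p hp
        rw [Finset.mem_coe, Finset.mem_filter, hD, Finset.mem_filter, Finset.mem_product,
          Finset.mem_powersetCard] at hp
        rw [Finset.mem_coe, Finset.mem_powersetCard]
        exact ⟨hp.2 ▸ Finset.subset_union_left, hp.1.1.1.2⟩
      · intro S hS
        rw [Finset.mem_coe, Finset.mem_powersetCard] at hS
        rw [Finset.mem_coe, Finset.mem_filter, hD, Finset.mem_filter, Finset.mem_product,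
          Finset.mem_powersetCard, Finset.mem_powersetCard]
        refine ⟨⟨⟨⟨Finset.subset_univ _, hS.2⟩, ⟨Finset.subset_univ _, ?_⟩⟩,
          Finset.disjoint_sdiff⟩, Finset.union_sdiff_of_subset hS.1⟩
        rw [Finset.card_sdiff_of_subset hS.1, hU.2, hS.2]; omega
      · intro p hp
        rw [Finset.mem_coe, Finset.mem_filter, hD, Finset.mem_filter] at hp
        have hd := hp.1.2
        have hu := hp.2
        ext1
        · rfl
        · simp only
          rw [← hu, Finset.union_sdiff_cancel_left hd]
      · intro S hS
        rfl
    rw [this, Finset.card_powersetCard, hU.2]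
  have hesymm : mk (esymm (Fin n) (ZMod 2) (i + l)) =
      ∑ U ∈ powersetCard (i + l) (univ : Finset (Fin n)), mk (∏ x ∈ U, X x) := by
    rw [esymm, map_sum]
  rw [Finset.sum_congr himg (fun U hU => by rw [hfib U hU]), hesymm, Finset.smul_sum]


end AuxLemmas

/-- if `1 ≤ j ≤ n` and `j` is not a power of `2`, then `σ_j` is decomposable in
`Λ_{F₂}(a_1,…,a_n)^{Σ_n}`: there is `0 < i < j` with `σ_j = σ_i · σ_{j-i}`. -/
theorem stmt6 (n j : ℕ) (hn : 1 ≤ n) (hj1 : 1 ≤ j) (hjn : j ≤ n)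
    (hpow : ¬ ∃ i : ℕ, j = 2 ^ i) :
    ∃ i : ℕ, 0 < i ∧ i < j ∧
      Ideal.Quotient.mk (sqIdeal n) (esymm (Fin n) (ZMod 2) j) =
        Ideal.Quotient.mk (sqIdeal n) (esymm (Fin n) (ZMod 2) i) *
          Ideal.Quotient.mk (sqIdeal n) (esymm (Fin n) (ZMod 2) (j - i)) := by
  classical
  set k := Nat.log 2 j with hk
  have hle : 2 ^ k ≤ j := Nat.pow_log_le_self 2 (by omega)
  have hlt : j < 2 ^ (k + 1) := Nat.lt_pow_succ_log_self (by norm_num) j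
  have hne : j ≠ 2 ^ k := fun h => hpow ⟨k, h⟩
  have hpow2 : 2 ^ (k + 1) = 2 * 2 ^ k := by ring
  set r := j - 2 ^ k with hr
  have hr0 : 0 < r := by omega
  have hrlt : r < 2 ^ k := by omega
  have hsum : 2 ^ k + r = j := by omega
  have hodd : j.choose (2 ^ k) % 2 = 1 := by
    rw [← hsum]; exact odd_choose_pow k r hrlt
  refine ⟨2 ^ k, Nat.pow_pos (by norm_num), by omega, ?_⟩
  have hkey := key n (2 ^ k) r
  rw [hsum] at hkey
  have hsmul : (j.choose (2 ^ k)) • Ideal.Quotient.mk (sqIdeal n) (esymm (Fin n) (ZMod 2) j) =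
      Ideal.Quotient.mk (sqIdeal n) (esymm (Fin n) (ZMod 2) j) := by
    rw [← Nat.cast_smul_eq_nsmul (ZMod 2), ← ZMod.natCast_mod, hodd, Nat.cast_one, one_smul]
  rw [hsmul] at hkey
  rw [← hkey, map_mul]
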